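/- Let Γ₁, Γ₂ be groups and let ι : Γ₁ → Γ₂ be an injective group homomorphism. Then the assignment g ↦ ι(g) (for g ∈ Γ₁), s₁ ↦ s₂, d₁ ↦ d₂ extends to a well-defined group homomorphism m(ι) : m(Γ₁) → m(Γ₂) between the standard mitoses, this homomorphism makes the square with the canonical maps Γᵢ → m(Γᵢ) commute, and m(ι) is injective. In other words, the standard mitosis construction is functorial and preserves monomorphisms. -/

import Mathlib

/-- The commutator with the convention `[x, y] := x⁻¹y⁻¹xy`. -/
def pcomm {G : Type*} [Group G] (x y : G) : G := x⁻¹ * y⁻¹ * x * y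

/-- The generator of the standard mitosis corresponding to `g ∈ Γ`,
as an element of the free group on `Γ ⊕ Bool` (`inr true ↦ s`, `inr false ↦ d`). -/
def mGen {Γ : Type*} [Group Γ] (g : Γ) : FreeGroup (Γ ⊕ Bool) :=
  FreeGroup.of (Sum.inl g)

/-- The extra generator `s` of the standard mitosis. -/
def mS (Γ : Type*) [Group Γ] : FreeGroup (Γ ⊕ Bool) := FreeGroup.of (Sum.inr true)

/-- The extra generator `d` of the standard mitosis. -/
def mD (Γ : Type*) [Group Γ] : FreeGroup (Γ ⊕ Bool) := FreeGroup.of (Sum.inr false)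

/-- The relators of the standard mitosis
`m(Γ) = ⟨Γ; s, d ∣ d⁻¹gd = g·s⁻¹gs, [g, s⁻¹hs] = 1 for all g, h ∈ Γ⟩`:
all relations holding in `Γ` among the generators coming from `Γ`, together with
the relators `d⁻¹gd·(g·s⁻¹gs)⁻¹` and `[g, s⁻¹hs]` for all `g, h ∈ Γ`. -/
def mitosisRels (Γ : Type*) [Group Γ] : Set (FreeGroup (Γ ⊕ Bool)) :=
  ((FreeGroup.map Sum.inl : FreeGroup Γ →* FreeGroup (Γ ⊕ Bool)) ''
      {w : FreeGroup Γ | FreeGroup.lift (id : Γ → Γ) w = 1})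
    ∪ {r | ∃ g : Γ, r = (mD Γ)⁻¹ * mGen g * mD Γ * (mGen g * (mS Γ)⁻¹ * mGen g * mS Γ)⁻¹}
    ∪ {r | ∃ g h : Γ, r = pcomm (mGen g) ((mS Γ)⁻¹ * mGen h * mS Γ)}

/-- The standard mitosis `m(Γ)` of a group `Γ`, as a presented group. -/
abbrev Mitosis (Γ : Type*) [Group Γ] : Type _ := PresentedGroup (mitosisRels Γ)

/-- The image in `m(Γ)` of the generator corresponding to `g ∈ Γ`. -/
def mGenM {Γ : Type*} [Group Γ] (g : Γ) : Mitosis Γ := PresentedGroup.of (Sum.inl g)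

/-- The image of the generator `s` in `m(Γ)`. -/
def mSM (Γ : Type*) [Group Γ] : Mitosis Γ := PresentedGroup.of (Sum.inr true)

/-- The image of the generator `d` in `m(Γ)`. -/
def mDM (Γ : Type*) [Group Γ] : Mitosis Γ := PresentedGroup.of (Sum.inr false)

open HNNExtension

namespace MitosisAux

/- ### Generalities on free groups -/

theorem lift_map {α β : Type*} {M : Type*} [Group M] (f : β → M) (j : α → β)
    (w : FreeGroup α) :
    FreeGroup.lift f (FreeGroup.map j w) = FreeGroup.lift (f ∘ j) w := by
  have h : (FreeGroup.lift f).comp (FreeGroup.map j) = FreeGroup.lift (f ∘ j) := by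
    ext x
    simp
  exact DFunLike.congr_fun h w

theorem lift_coe_hom {α : Type*} {M : Type*} [Group M] (H : FreeGroup α →* M)
    (w : FreeGroup α) :
    FreeGroup.lift (fun x => H (FreeGroup.of x)) w = H w := by
  have h : FreeGroup.lift (fun x => H (FreeGroup.of x)) = H := by
    ext x
    simp
  exact DFunLike.congr_fun h w

theorem lift_hom_comp_lift_id {Γ : Type*} [Group Γ] {M : Type*} [Group M]
    (H : Γ →* M) (w : FreeGroup Γ) :
    FreeGroup.lift (⇑H) w = H (FreeGroup.lift (id : Γ → Γ) w) := by
  have h : FreeGroup.lift (⇑H) = H.comp (FreeGroup.lift (id : Γ → Γ)) := by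
    ext x
    simp
  exact DFunLike.congr_fun h w

theorem comm_of_pcomm {G : Type*} [Group G] {x y : G} (h : x⁻¹ * y⁻¹ * x * y = 1) :
    x * y = y * x := by
  have h2 := congrArg (fun z => y * x * z) h
  simpa [mul_assoc] using h2

theorem pcomm_eq_one {G : Type*} [Group G] {x y : G} (h : x * y = y * x) :
    x⁻¹ * y⁻¹ * x * y = 1 := by
  have h3 : y⁻¹ * (x * y) = x := by rw [h]; group
  calc x⁻¹ * y⁻¹ * x * y = x⁻¹ * (y⁻¹ * (x * y)) := by group
    _ = x⁻¹ * x := by rw [h3]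
    _ = 1 := by group

theorem conj_mul_distrib {G : Type*} [Group G] (s a b : G) :
    s⁻¹ * (a * b) * s = (s⁻¹ * a * s) * (s⁻¹ * b * s) := by group

/- ### The general HNN mapping lemma -/

section MapHNN

variable {G₁ G₂ : Type*} [Group G₁] [Group G₂]
  {A₁ B₁ : Subgroup G₁} {A₂ B₂ : Subgroup G₂}
  {φ₁ : A₁ ≃* B₁} {φ₂ : A₂ ≃* B₂}

/-- The map between HNN extensions induced by a compatible map of the base groups. -/
def mapHNN (f : G₁ →* G₂) (hA : ∀ g : G₁, f g ∈ A₂ ↔ g ∈ A₁)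
    (hφ : ∀ a : A₁, f (φ₁ a) = φ₂ ⟨f a, (hA a).2 a.2⟩) :
    HNNExtension G₁ A₁ B₁ φ₁ →* HNNExtension G₂ A₂ B₂ φ₂ :=
  HNNExtension.lift ((of : G₂ →* HNNExtension G₂ A₂ B₂ φ₂).comp f) t (fun a => by
    simp only [MonoidHom.comp_apply]
    rw [hφ a]
    exact t_mul_of (⟨f a, (hA a).2 a.2⟩ : A₂))

variable (f : G₁ →* G₂) (hA : ∀ g : G₁, f g ∈ A₂ ↔ g ∈ A₁)
    (hB : ∀ g : G₁, f g ∈ B₂ ↔ g ∈ B₁)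
    (hφ : ∀ a : A₁, f (φ₁ a) = φ₂ ⟨f a, (hA a).2 a.2⟩)

@[simp] theorem mapHNN_of (g : G₁) : mapHNN f hA hφ (of g) = of (f g) := by
  simp [mapHNN]

@[simp] theorem mapHNN_t : mapHNN f hA hφ (t : HNNExtension G₁ A₁ B₁ φ₁) = t := by
  simp [mapHNN]

include hA hB in
theorem hT (u : ℤˣ) (g : G₁) :
    f g ∈ toSubgroup A₂ B₂ u ↔ g ∈ toSubgroup A₁ B₁ u := by
  rcases Int.units_eq_one_or u with rfl | rfl <;> simp [hA, hB]

/-- The image of a reduced word under the induced map. -/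
def mapWord (f : G₁ →* G₂) (hA : ∀ g : G₁, f g ∈ A₂ ↔ g ∈ A₁)
    (hB : ∀ g : G₁, f g ∈ B₂ ↔ g ∈ B₁)
    (w : NormalWord.ReducedWord G₁ A₁ B₁) : NormalWord.ReducedWord G₂ A₂ B₂ where
  head := f w.head
  toList := w.toList.map (Prod.map id f)
  chain := by
    rw [List.isChain_map]
    refine w.chain.imp ?_
    rintro ⟨u, g⟩ ⟨v, h⟩ hyp
    simp only [Prod.map_fst, Prod.map_snd, id_eq]
    intro hmem
    exact hyp ((hT f hA hB u g).1 hmem)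

theorem prod_mapWord (w : NormalWord.ReducedWord G₁ A₁ B₁) :
    (mapWord f hA hB w).prod φ₂ = mapHNN f hA hφ (w.prod φ₁) := by
  simp only [NormalWord.ReducedWord.prod, mapWord, map_mul, mapHNN_of, List.map_map]
  rw [MonoidHom.map_list_prod, List.map_map]
  exact congrArg (fun z => of (f w.head) * z) (congrArg List.prod
    (List.map_congr_left (fun x _ => by
      simp [Function.comp_def, map_zpow, Prod.map])))

theorem exists_word (x : HNNExtension G₁ A₁ B₁ φ₁) :
    ∃ w : NormalWord.ReducedWord G₁ A₁ B₁, w.prod φ₁ = x := by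
  rcases NormalWord.TransversalPair.nonempty G₁ A₁ B₁ with ⟨d⟩
  exact ⟨((NormalWord.equiv φ₁ d) x).toReducedWord, (NormalWord.equiv φ₁ d).symm_apply_apply x⟩

include hB in
theorem mapHNN_injective (hf : Function.Injective f) :
    Function.Injective (mapHNN f hA hφ) := by
  rw [injective_iff_map_eq_one]
  intro x hx
  obtain ⟨w, rfl⟩ := exists_word x
  have h1 : (mapWord f hA hB w).prod φ₂ = 1 := by
    rw [prod_mapWord f hA hB hφ]; exact hx
  have h2 : (mapWord f hA hB w).toList = [] := by
    refine ReducedWord.toList_eq_nil_of_mem_of_range φ₂ _ ?_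
    rw [h1]; exact one_mem _
  have h3 : w.toList = [] := by
    simpa [mapWord] using h2
  have h4 : w.prod φ₁ = of w.head := by simp [NormalWord.ReducedWord.prod, h3]
  rw [h4] at hx ⊢
  rw [mapHNN_of] at hx
  have h5 : f w.head = 1 := HNNExtension.of_injective (φ := φ₂) (by simpa using hx)
  have h6 : w.head = 1 := hf (by simpa using h5)
  simp [h6]

include hB in
/-- Membership in images of mapped subgroups pulls back. -/
theorem mapHNN_mem_map_iff (S₁ : Subgroup G₁) (S₂ : Subgroup G₂)
    (hS : ∀ g : G₁, f g ∈ S₂ ↔ g ∈ S₁) (x : HNNExtension G₁ A₁ B₁ φ₁) :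
    mapHNN f hA hφ x ∈ S₂.map of ↔ x ∈ S₁.map of := by
  constructor
  · rintro ⟨b, hb, hbx⟩
    obtain ⟨w, rfl⟩ := exists_word x
    have h1 : (mapWord f hA hB w).prod φ₂ = of b := by
      rw [prod_mapWord f hA hB hφ, hbx]
    have h2 : (mapWord f hA hB w).toList = [] := by
      refine ReducedWord.toList_eq_nil_of_mem_of_range φ₂ _ ?_
      rw [h1]; exact ⟨b, rfl⟩
    have h3 : w.toList = [] := by simpa [mapWord] using h2
    have h4 : w.prod φ₁ = of w.head := by simp [NormalWord.ReducedWord.prod, h3]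
    rw [h4]
    refine ⟨w.head, ?_, rfl⟩
    have h5 : f w.head = b := HNNExtension.of_injective (φ := φ₂) (by
      rw [← h1]; simp [NormalWord.ReducedWord.prod, mapWord, h3])
    exact (hS w.head).1 (by rw [h5]; exact hb)
  · rintro ⟨g, hg, rfl⟩
    exact ⟨f g, (hS g).2 hg, by rw [mapHNN_of]⟩

end MapHNN

/- ### The concrete model of the mitosis -/

section Model

variable (Γ : Type*) [Group Γ]

/-- `1 × Γ` -/
abbrev sbA : Subgroup (Γ × Γ) := (⊥ : Subgroup Γ).prod ⊤
/-- `Γ × 1` -/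
abbrev sbB : Subgroup (Γ × Γ) := (⊤ : Subgroup Γ).prod ⊥

/-- The diagonal subgroup of `Γ × Γ`. -/
def diagSub : Subgroup (Γ × Γ) where
  carrier := {p | p.1 = p.2}
  one_mem' := rfl
  mul_mem' := by rintro ⟨a, b⟩ ⟨c, d⟩ h1 h2; simp_all [Set.mem_setOf_eq]
  inv_mem' := by rintro ⟨a, b⟩ h; simp_all [Set.mem_setOf_eq]

@[simp] theorem mem_diagSub {p : Γ × Γ} : p ∈ diagSub Γ ↔ p.1 = p.2 := Iff.rfl

/-- `(1,g) ↦ (g,1)` -/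
def swapEquiv : sbA Γ ≃* sbB Γ where
  toFun x := ⟨(x.1.2, x.1.1), by
    rcases x with ⟨⟨a, b⟩, h⟩
    rcases Subgroup.mem_prod.1 h with ⟨h1, h2⟩
    exact Subgroup.mem_prod.2 ⟨Subgroup.mem_top _, h1⟩⟩
  invFun x := ⟨(x.1.2, x.1.1), by
    rcases x with ⟨⟨a, b⟩, h⟩
    rcases Subgroup.mem_prod.1 h with ⟨h1, h2⟩
    exact Subgroup.mem_prod.2 ⟨h2, Subgroup.mem_top _⟩⟩
  left_inv x := by ext <;> rfl
  right_inv x := by ext <;> rfl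
  map_mul' x y := by ext <;> rfl

@[simp] theorem swapEquiv_coe (x : sbA Γ) :
    ((swapEquiv Γ x : sbB Γ) : Γ × Γ) = ((x : Γ × Γ).2, (x : Γ × Γ).1) := rfl

@[simp] theorem swapEquiv_symm_coe (x : sbB Γ) :
    (((swapEquiv Γ).symm x : sbA Γ) : Γ × Γ) = ((x : Γ × Γ).2, (x : Γ × Γ).1) := rfl

/-- The inner HNN extension `⟨Γ × Γ, s⟩`. -/
abbrev BGrp : Type _ := HNNExtension (Γ × Γ) (sbA Γ) (sbB Γ) (swapEquiv Γ)

/-- `(g,g) ↦ (g,1)` -/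
def diagToB : diagSub Γ ≃* sbB Γ where
  toFun x := ⟨(x.1.1, 1), Subgroup.mem_prod.2 ⟨Subgroup.mem_top _, rfl⟩⟩
  invFun x := ⟨(x.1.1, x.1.1), rfl⟩
  left_inv x := by
    rcases x with ⟨⟨a, b⟩, h⟩
    have hab : a = b := h
    subst hab
    rfl
  right_inv x := by
    rcases x with ⟨⟨a, b⟩, h⟩
    rcases Subgroup.mem_prod.1 h with ⟨-, h2⟩
    have hb : b = 1 := h2
    subst hb
    rfl
  map_mul' x y := by ext <;> simp

/-- Image of the diagonal in `BGrp`. -/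
abbrev outA : Subgroup (BGrp Γ) := (diagSub Γ).map of
/-- Image of `Γ × 1` in `BGrp`. -/
abbrev outB : Subgroup (BGrp Γ) := (sbB Γ).map of

/-- `of (g,g) ↦ of (g,1)` -/
noncomputable def outEquiv : outA Γ ≃* outB Γ :=
  (((diagSub Γ).equivMapOfInjective of (of_injective (φ := swapEquiv Γ))).symm.trans
      (diagToB Γ)).trans
    ((sbB Γ).equivMapOfInjective of (of_injective (φ := swapEquiv Γ)))

theorem outEquiv_apply (x : outA Γ) (p : Γ × Γ) (hp : p ∈ diagSub Γ)
    (hx : (x : BGrp Γ) = of p) :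
    ((outEquiv Γ x : outB Γ) : BGrp Γ) = of (p.1, (1 : Γ)) := by
  have hxe : x = ⟨of p, ⟨p, hp, rfl⟩⟩ := Subtype.ext hx
  subst hxe
  have h1 : ((diagSub Γ).equivMapOfInjective of (of_injective (φ := swapEquiv Γ))).symm
      ⟨of p, ⟨p, hp, rfl⟩⟩ = ⟨p, hp⟩ := by
    rw [MulEquiv.symm_apply_eq]
    ext
    rw [Subgroup.coe_equivMapOfInjective_apply]
  simp only [outEquiv, MulEquiv.trans_apply]
  rw [Subgroup.coe_equivMapOfInjective_apply, h1]
  rfl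

theorem outEquiv_symm_apply (y : outB Γ) (g : Γ) (hy : (y : BGrp Γ) = of (g, (1 : Γ))) :
    (((outEquiv Γ).symm y : outA Γ) : BGrp Γ) = of (g, g) := by
  have hx : (outEquiv Γ) ⟨of (g, g), ⟨(g, g), rfl, rfl⟩⟩ = y := by
    ext
    rw [outEquiv_apply Γ _ (g, g) rfl rfl, hy]
  rw [← hx, MulEquiv.symm_apply_apply]

/-- The model of the mitosis: `⟨BGrp, d⟩`. -/
abbrev XGrp : Type _ := HNNExtension (BGrp Γ) (outA Γ) (outB Γ) (outEquiv Γ)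

/-- The image of the generator `g` in the model. -/
noncomputable def genX (g : Γ) : XGrp Γ := of (of (g, (1 : Γ)))
/-- The image of `s` in the model. -/
noncomputable def sX : XGrp Γ := of t
/-- The image of `d` in the model. -/
noncomputable def dX : XGrp Γ := t

theorem s_conj (g : Γ) : (sX Γ)⁻¹ * genX Γ g * sX Γ = of (of ((1 : Γ), g)) := by
  have h1 : (of ((swapEquiv Γ).symm ⟨(g, 1), Subgroup.mem_prod.2 ⟨Subgroup.mem_top _, rfl⟩⟩ :
      Γ × Γ) : BGrp Γ) = t⁻¹ * of (g, (1 : Γ)) * t :=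
    equiv_symm_eq_conj _
  have h2 : (t⁻¹ * of (g, (1 : Γ)) * t : BGrp Γ) = of ((1 : Γ), g) := by
    rw [← h1]
    rfl
  calc (sX Γ)⁻¹ * genX Γ g * sX Γ
      = of ((t⁻¹ * of (g, (1 : Γ)) * t : BGrp Γ)) := by
        simp [sX, genX, map_mul]
    _ = of (of ((1 : Γ), g)) := by rw [h2]

theorem d_conj (g : Γ) : (dX Γ)⁻¹ * genX Γ g * dX Γ = of (of (g, g)) := by
  have h1 : (of (((outEquiv Γ).symm ⟨of (g, (1 : Γ)),
        ⟨(g, 1), Subgroup.mem_prod.2 ⟨Subgroup.mem_top _, rfl⟩, rfl⟩⟩ : outA Γ) : BGrp Γ) :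
      XGrp Γ) = t⁻¹ * of (of (g, (1 : Γ))) * t :=
    equiv_symm_eq_conj _
  rw [outEquiv_symm_apply Γ _ g rfl] at h1
  calc (dX Γ)⁻¹ * genX Γ g * dX Γ = t⁻¹ * of (of (g, (1 : Γ))) * t := rfl
    _ = of (of (g, g)) := h1.symm

end Model

end MitosisAux
namespace MitosisAux

/- ### Basic relations in the mitosis -/

section MitosisLemmas

variable (Γ : Type*) [Group Γ]

theorem mk_rel_eq_one {r : FreeGroup (Γ ⊕ Bool)} (hr : r ∈ mitosisRels Γ) :
    PresentedGroup.mk (mitosisRels Γ) r = 1 :=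
  (QuotientGroup.eq_one_iff _).2 (Subgroup.subset_normalClosure hr)

theorem mk_of (x : Γ ⊕ Bool) :
    PresentedGroup.mk (mitosisRels Γ) (FreeGroup.of x) = PresentedGroup.of x := rfl

variable {Γ}

theorem mGenM_mul (g h : Γ) : mGenM g * mGenM h = mGenM (g * h) := by
  have hr : (FreeGroup.map Sum.inl : FreeGroup Γ →* FreeGroup (Γ ⊕ Bool))
      (FreeGroup.of g * FreeGroup.of h * (FreeGroup.of (g * h))⁻¹) ∈ mitosisRels Γ := by
    refine Or.inl (Or.inl ⟨_, ?_, rfl⟩)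
    simp [Set.mem_setOf_eq, mul_assoc]
  have h1 := mk_rel_eq_one Γ hr
  simp only [map_mul, map_inv, FreeGroup.map.of, mk_of] at h1
  exact mul_inv_eq_one.1 h1

theorem mGenM_one : (mGenM (1 : Γ) : Mitosis Γ) = 1 := by
  have hr : (FreeGroup.map Sum.inl : FreeGroup Γ →* FreeGroup (Γ ⊕ Bool))
      (FreeGroup.of (1 : Γ)) ∈ mitosisRels Γ := by
    refine Or.inl (Or.inl ⟨_, ?_, rfl⟩)
    simp [Set.mem_setOf_eq]
  have h1 := mk_rel_eq_one Γ hr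
  simpa only [FreeGroup.map.of, mk_of, mGenM] using h1

theorem mitosis_comm (g h : Γ) :
    mGenM g * ((mSM Γ)⁻¹ * mGenM h * mSM Γ) = ((mSM Γ)⁻¹ * mGenM h * mSM Γ) * mGenM g := by
  have hr : pcomm (mGen g) ((mS Γ)⁻¹ * mGen h * mS Γ) ∈ mitosisRels Γ :=
    Or.inr ⟨g, h, rfl⟩
  have h1 := mk_rel_eq_one Γ hr
  simp only [pcomm, mGen, mS, map_mul, map_inv, mk_of] at h1
  exact comm_of_pcomm (by simpa [mGenM, mSM, mul_assoc] using h1)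

theorem mitosis_d (g : Γ) :
    (mDM Γ)⁻¹ * mGenM g * mDM Γ = mGenM g * (mSM Γ)⁻¹ * mGenM g * mSM Γ := by
  have hr : (mD Γ)⁻¹ * mGen g * mD Γ * (mGen g * (mS Γ)⁻¹ * mGen g * mS Γ)⁻¹
      ∈ mitosisRels Γ := Or.inl (Or.inr ⟨g, rfl⟩)
  have h1 := mk_rel_eq_one Γ hr
  simp only [mGen, mS, mD, map_mul, map_inv, mk_of] at h1
  exact mul_inv_eq_one.1 (by simpa [mGenM, mSM, mDM, mul_assoc] using h1)

variable (Γ)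

/-- `mGenM` as a homomorphism. -/
def genHom : Γ →* Mitosis Γ where
  toFun := mGenM
  map_one' := mGenM_one
  map_mul' g h := (mGenM_mul g h).symm

@[simp] theorem genHom_apply (g : Γ) : genHom Γ g = mGenM g := rfl

end MitosisLemmas

/- ### The map from the mitosis to the model -/

section ToModel

variable (Γ : Type*) [Group Γ]

/-- Images of the mitosis generators in the model. -/
noncomputable def toModelFun : Γ ⊕ Bool → XGrp Γ
  | Sum.inl g => genX Γ g
  | Sum.inr true => sX Γ
  | Sum.inr false => dX Γ

theorem toModel_rels : ∀ r ∈ mitosisRels Γ, FreeGroup.lift (toModelFun Γ) r = 1 := by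
  rintro r ((⟨w, hw, rfl⟩ | ⟨g, rfl⟩) | ⟨g, h, rfl⟩)
  · rw [lift_map]
    have hfun : (toModelFun Γ ∘ Sum.inl : Γ → XGrp Γ)
        = ⇑((of : BGrp Γ →* XGrp Γ).comp ((of : Γ × Γ →* BGrp Γ).comp
          (MonoidHom.inl Γ Γ))) := by
      funext g
      rfl
    rw [hfun, lift_hom_comp_lift_id, hw, map_one]
  · simp only [mGen, mS, mD, map_mul, map_inv, FreeGroup.lift_apply_of]
    show (dX Γ)⁻¹ * genX Γ g * dX Γ * (genX Γ g * (sX Γ)⁻¹ * genX Γ g * sX Γ)⁻¹ = 1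
    refine mul_inv_eq_one.2 ?_
    rw [d_conj]
    rw [show genX Γ g * (sX Γ)⁻¹ * genX Γ g * sX Γ
        = genX Γ g * ((sX Γ)⁻¹ * genX Γ g * sX Γ) by group]
    rw [s_conj]
    rw [genX, ← map_mul, ← map_mul]
    congr 2
    ext <;> simp
  · simp only [pcomm, mGen, mS, map_mul, map_inv, FreeGroup.lift_apply_of]
    show (genX Γ g)⁻¹ * ((sX Γ)⁻¹ * genX Γ h * sX Γ)⁻¹ * genX Γ g
        * ((sX Γ)⁻¹ * genX Γ h * sX Γ) = 1
    refine pcomm_eq_one ?_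
    rw [s_conj, genX, ← map_mul, ← map_mul, ← map_mul, ← map_mul]
    congr 2
    ext <;> simp

/-- The map from the mitosis to the model. -/
noncomputable def toModel : Mitosis Γ →* XGrp Γ := PresentedGroup.toGroup (toModel_rels Γ)

@[simp] theorem toModel_genM (g : Γ) : toModel Γ (mGenM g) = genX Γ g :=
  PresentedGroup.toGroup.of _
@[simp] theorem toModel_sM : toModel Γ (mSM Γ) = sX Γ :=
  PresentedGroup.toGroup.of _
@[simp] theorem toModel_dM : toModel Γ (mDM Γ) = dX Γ :=
  PresentedGroup.toGroup.of _

end ToModel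

/- ### The map from the model back to the mitosis -/

section Psi

variable (Γ : Type*) [Group Γ]

/-- `(g, h) ↦ g · s⁻¹ h s`. -/
def psi0 : Γ × Γ →* Mitosis Γ where
  toFun p := mGenM p.1 * ((mSM Γ)⁻¹ * mGenM p.2 * mSM Γ)
  map_one' := by simp [mGenM_one]
  map_mul' p q := by
    simp only [Prod.fst_mul, Prod.snd_mul, ← mGenM_mul, conj_mul_distrib]
    have h := mitosis_comm q.1 p.2
    calc (mGenM p.1 * mGenM q.1)
          * (((mSM Γ)⁻¹ * mGenM p.2 * mSM Γ) * ((mSM Γ)⁻¹ * mGenM q.2 * mSM Γ))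
        = mGenM p.1 * ((mGenM q.1 * ((mSM Γ)⁻¹ * mGenM p.2 * mSM Γ))
            * ((mSM Γ)⁻¹ * mGenM q.2 * mSM Γ)) := by group
      _ = mGenM p.1 * ((((mSM Γ)⁻¹ * mGenM p.2 * mSM Γ) * mGenM q.1)
            * ((mSM Γ)⁻¹ * mGenM q.2 * mSM Γ)) := by rw [h]
      _ = (mGenM p.1 * ((mSM Γ)⁻¹ * mGenM p.2 * mSM Γ))
            * (mGenM q.1 * ((mSM Γ)⁻¹ * mGenM q.2 * mSM Γ)) := by group

@[simp] theorem psi0_apply (p : Γ × Γ) :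
    psi0 Γ p = mGenM p.1 * ((mSM Γ)⁻¹ * mGenM p.2 * mSM Γ) := rfl

/-- Lift of `psi0` to the inner HNN extension. -/
def psi1 : BGrp Γ →* Mitosis Γ :=
  HNNExtension.lift (psi0 Γ) (mSM Γ) (by
    rintro ⟨⟨a, b⟩, hab⟩
    have ha : a = 1 := Subgroup.mem_bot.1 (Subgroup.mem_prod.1 hab).1
    subst ha
    simp only [psi0_apply, swapEquiv_coe]
    simp [mGenM_one, mul_assoc])

@[simp] theorem psi1_of (p : Γ × Γ) : psi1 Γ (of p) = psi0 Γ p := by simp [psi1]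
@[simp] theorem psi1_t : psi1 Γ (t : BGrp Γ) = mSM Γ := by simp [psi1]

/-- Lift of `psi1` to the full model. -/
noncomputable def psiX : XGrp Γ →* Mitosis Γ :=
  HNNExtension.lift (psi1 Γ) (mDM Γ) (by
    rintro ⟨x, hx⟩
    obtain ⟨p, hp, rfl⟩ := hx
    rw [outEquiv_apply Γ _ p hp rfl]
    obtain ⟨g, g'⟩ := p
    have hg : g = g' := hp
    subst hg
    simp only [psi1_of, psi0_apply]
    have h2 : mGenM g * mDM Γ
        = mDM Γ * (mGenM g * (mSM Γ)⁻¹ * mGenM g * mSM Γ) := by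
      rw [← mitosis_d]; group
    calc mDM Γ * (mGenM g * ((mSM Γ)⁻¹ * mGenM g * mSM Γ))
        = mDM Γ * (mGenM g * (mSM Γ)⁻¹ * mGenM g * mSM Γ) := by group
      _ = mGenM g * mDM Γ := h2.symm
      _ = mGenM g * ((mSM Γ)⁻¹ * mGenM (1 : Γ) * mSM Γ) * mDM Γ := by
          simp [mGenM_one])

@[simp] theorem psiX_of (x : BGrp Γ) : psiX Γ (of x) = psi1 Γ x := by simp [psiX]
@[simp] theorem psiX_t : psiX Γ (t : XGrp Γ) = mDM Γ := by simp [psiX]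

theorem psiX_toModel (x : Mitosis Γ) : psiX Γ (toModel Γ x) = x := by
  have h : (psiX Γ).comp (toModel Γ) = MonoidHom.id (Mitosis Γ) := by
    refine PresentedGroup.ext ?_
    rintro (g | b)
    · show psiX Γ (toModel Γ (mGenM g)) = mGenM g
      simp [genX, mGenM_one, mul_assoc]
    · cases b
      · show psiX Γ (toModel Γ (mDM Γ)) = mDM Γ
        simp [dX]
      · show psiX Γ (toModel Γ (mSM Γ)) = mSM Γ
        simp [sX]
  exact DFunLike.congr_fun h x

theorem toModel_injective : Function.Injective (toModel Γ) := by
  intro a b h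
  have := congrArg (psiX Γ) h
  simpa [psiX_toModel] using this

end Psi

end MitosisAux
namespace MitosisAux

/- ### Functoriality -/

section Functorial

variable {Γ₁ Γ₂ : Type*} [Group Γ₁] [Group Γ₂] (ι : Γ₁ →* Γ₂)

/-- Images of the generators under the induced map of mitoses. -/
def mitosisMapFun : Γ₁ ⊕ Bool → Mitosis Γ₂ := fun x => PresentedGroup.of (Sum.map ι id x)

theorem mitosisMap_rels : ∀ r ∈ mitosisRels Γ₁, FreeGroup.lift (mitosisMapFun ι) r = 1 := by
  rintro r ((⟨w, hw, rfl⟩ | ⟨g, rfl⟩) | ⟨g, h, rfl⟩)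
  · rw [lift_map]
    have hfun : (mitosisMapFun ι ∘ Sum.inl) = ⇑((genHom Γ₂).comp ι) := by
      funext g; rfl
    rw [hfun, lift_hom_comp_lift_id, hw, map_one]
  · simp only [mGen, mS, mD, map_mul, map_inv, FreeGroup.lift_apply_of]
    show (mDM Γ₂)⁻¹ * mGenM (ι g) * mDM Γ₂
        * (mGenM (ι g) * (mSM Γ₂)⁻¹ * mGenM (ι g) * mSM Γ₂)⁻¹ = 1
    exact mul_inv_eq_one.2 (mitosis_d (ι g))
  · simp only [pcomm, mGen, mS, map_mul, map_inv, FreeGroup.lift_apply_of]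
    show (mGenM (ι g))⁻¹ * ((mSM Γ₂)⁻¹ * mGenM (ι h) * mSM Γ₂)⁻¹ * mGenM (ι g)
        * ((mSM Γ₂)⁻¹ * mGenM (ι h) * mSM Γ₂) = 1
    exact pcomm_eq_one (mitosis_comm (ι g) (ι h))

/-- The induced map of mitoses. -/
def mitosisMap : Mitosis Γ₁ →* Mitosis Γ₂ := PresentedGroup.toGroup (mitosisMap_rels ι)

@[simp] theorem mitosisMap_genM (g : Γ₁) : mitosisMap ι (mGenM g) = mGenM (ι g) :=
  PresentedGroup.toGroup.of _
@[simp] theorem mitosisMap_sM : mitosisMap ι (mSM Γ₁) = mSM Γ₂ :=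
  PresentedGroup.toGroup.of _
@[simp] theorem mitosisMap_dM : mitosisMap ι (mDM Γ₁) = mDM Γ₂ :=
  PresentedGroup.toGroup.of _

variable (hι : Function.Injective ι)

include hι in
theorem inj_one_iff {x : Γ₁} : ι x = 1 ↔ x = 1 := by
  rw [← map_one ι, hι.eq_iff]

include hι in
theorem prodMap_injective : Function.Injective ⇑(ι.prodMap ι) := fun p q h => by
  have h1 := congrArg Prod.fst h
  have h2 := congrArg Prod.snd h
  exact Prod.ext (hι h1) (hι h2)

include hι in
theorem hA0 : ∀ p : Γ₁ × Γ₁, (ι.prodMap ι) p ∈ sbA Γ₂ ↔ p ∈ sbA Γ₁ := fun p => by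
  simp [Subgroup.mem_prod, inj_one_iff ι hι]

include hι in
theorem hB0 : ∀ p : Γ₁ × Γ₁, (ι.prodMap ι) p ∈ sbB Γ₂ ↔ p ∈ sbB Γ₁ := fun p => by
  simp [Subgroup.mem_prod, inj_one_iff ι hι]

theorem hφ0 : ∀ a : sbA Γ₁, (ι.prodMap ι) ((swapEquiv Γ₁) a : Γ₁ × Γ₁)
    = ((swapEquiv Γ₂) ⟨(ι.prodMap ι) a, (hA0 ι hι a).2 a.2⟩ : Γ₂ × Γ₂) :=
  fun _ => rfl

/-- The induced map of the inner HNN extensions. -/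
noncomputable def F0 : BGrp Γ₁ →* BGrp Γ₂ := mapHNN (ι.prodMap ι) (hA0 ι hι) (hφ0 ι hι)

@[simp] theorem F0_of (p : Γ₁ × Γ₁) : F0 ι hι (of p) = of ((ι.prodMap ι) p) :=
  mapHNN_of _ _ _ _
@[simp] theorem F0_t : F0 ι hι (t : BGrp Γ₁) = t := mapHNN_t _ _ _

include hι in
theorem hdiag : ∀ p : Γ₁ × Γ₁, (ι.prodMap ι) p ∈ diagSub Γ₂ ↔ p ∈ diagSub Γ₁ := fun p => by
  simp [hι.eq_iff]

theorem hA1 : ∀ x : BGrp Γ₁, F0 ι hι x ∈ outA Γ₂ ↔ x ∈ outA Γ₁ := fun x =>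
  mapHNN_mem_map_iff _ (hA0 ι hι) (hB0 ι hι) (hφ0 ι hι)
    (diagSub Γ₁) (diagSub Γ₂) (hdiag ι hι) x

theorem hB1 : ∀ x : BGrp Γ₁, F0 ι hι x ∈ outB Γ₂ ↔ x ∈ outB Γ₁ := fun x =>
  mapHNN_mem_map_iff _ (hA0 ι hι) (hB0 ι hι) (hφ0 ι hι)
    (sbB Γ₁) (sbB Γ₂) (hB0 ι hι) x

theorem hφ1 : ∀ a : outA Γ₁, F0 ι hι ((outEquiv Γ₁) a : BGrp Γ₁)
    = ((outEquiv Γ₂) ⟨F0 ι hι a, (hA1 ι hι _).2 a.2⟩ : BGrp Γ₂) := by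
  rintro ⟨x, hx⟩
  obtain ⟨p, hp, rfl⟩ := hx
  rw [outEquiv_apply Γ₁ _ p hp rfl]
  rw [outEquiv_apply Γ₂ _ ((ι.prodMap ι) p) ((hdiag ι hι p).2 hp) (F0_of ι hι p)]
  rw [F0_of]
  simp

/-- The induced map of the models. -/
noncomputable def FX : XGrp Γ₁ →* XGrp Γ₂ := mapHNN (F0 ι hι) (hA1 ι hι) (hφ1 ι hι)

@[simp] theorem FX_of (x : BGrp Γ₁) : FX ι hι (of x) = of (F0 ι hι x) :=
  mapHNN_of _ _ _ _
@[simp] theorem FX_t : FX ι hι (t : XGrp Γ₁) = t := mapHNN_t _ _ _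

theorem FX_injective : Function.Injective (FX ι hι) :=
  mapHNN_injective (F0 ι hι) (hA1 ι hι) (hB1 ι hι) (hφ1 ι hι)
    (mapHNN_injective _ (hA0 ι hι) (hB0 ι hι) (hφ0 ι hι) (prodMap_injective ι hι))

theorem square : (FX ι hι).comp (toModel Γ₁) = (toModel Γ₂).comp (mitosisMap ι) := by
  refine PresentedGroup.ext ?_
  rintro (g | b)
  · show FX ι hι (toModel Γ₁ (mGenM g)) = toModel Γ₂ (mitosisMap ι (mGenM g))
    rw [toModel_genM, mitosisMap_genM, toModel_genM]
    simp [genX]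
  · cases b
    · show FX ι hι (toModel Γ₁ (mDM Γ₁)) = toModel Γ₂ (mitosisMap ι (mDM Γ₁))
      rw [toModel_dM, mitosisMap_dM, toModel_dM]
      simp [dX]
    · show FX ι hι (toModel Γ₁ (mSM Γ₁)) = toModel Γ₂ (mitosisMap ι (mSM Γ₁))
      rw [toModel_sM, mitosisMap_sM, toModel_sM]
      simp [sX]

include hι in
theorem mitosisMap_injective : Function.Injective (mitosisMap ι) := by
  intro a b h
  apply toModel_injective Γ₁
  apply FX_injective ι hι
  have ha := DFunLike.congr_fun (square ι hι) a
  have hb := DFunLike.congr_fun (square ι hι) b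
  simp only [MonoidHom.comp_apply] at ha hb
  rw [ha, hb, h]

end Functorial

end MitosisAux

/-- The standard mitosis construction is functorial and preserves
monomorphisms: every injective homomorphism `ι : Γ₁ → Γ₂` extends to a
homomorphism `m(ι) : m(Γ₁) → m(Γ₂)` with `g ↦ ι(g)`, `s₁ ↦ s₂`, `d₁ ↦ d₂`
(so that the square with the canonical maps `Γᵢ → m(Γᵢ)` commutes),
and `m(ι)` is injective. -/
theorem mitosis_functorial_injective
    (Γ₁ Γ₂ : Type*) [Group Γ₁] [Group Γ₂]
    (ι : Γ₁ →* Γ₂) (hι : Function.Injective ι) :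
    ∃ M : Mitosis Γ₁ →* Mitosis Γ₂,
      (∀ g : Γ₁, M (mGenM g) = mGenM (ι g)) ∧
      M (mSM Γ₁) = mSM Γ₂ ∧
      M (mDM Γ₁) = mDM Γ₂ ∧
      Function.Injective M :=
  ⟨MitosisAux.mitosisMap ι, MitosisAux.mitosisMap_genM ι, MitosisAux.mitosisMap_sM ι,
    MitosisAux.mitosisMap_dM ι, MitosisAux.mitosisMap_injective ι hι⟩
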